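/- Let G be a finite solvable group and U a normal cyclic subgroup of G. Let q be a prime power, n ≥ 1 an integer, F a finite field with q^{2n} elements, and φ : U → Fˣ an injective group homomorphism. Suppose α ∈ G \ U has order 2 and for every u ∈ U one has φ(α u α⁻¹) = φ(u)^{q^n}. Then the number of elements of order 2 in the coset αU is at most q^n + 1. -/

import Mathlib

/-- Let `G` be a finite solvable group and `U` a normal cyclic subgroup of `G`.
Let `q` be a prime power, `n ≥ 1`, `F` a finite field with `q^(2n)` elements, and
`φ : U → Fˣ` an injective group homomorphism.  Suppose `α ∈ G \ U` has order `2` and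
conjugation by `α` corresponds under `φ` to the Frobenius `x ↦ x^(q^n)`.  Then the number of
elements of order `2` in the coset `αU` is at most `q^n + 1`. -/
theorem stmt1 (G : Type*) [Group G] [Fintype G] (hsolv : IsSolvable G)
    (U : Subgroup G) (hUnormal : U.Normal) (hUcyclic : IsCyclic U)
    (q n : ℕ) (hq : IsPrimePow q) (hn : 1 ≤ n)
    (F : Type*) [Field F] [Fintype F] (hF : Fintype.card F = q ^ (2 * n))
    (φ : U →* Fˣ) (hφ : Function.Injective φ)
    (α : G) (hαU : α ∉ U) (hα2 : orderOf α = 2)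
    (hact : ∀ u : U, φ ⟨α * u * α⁻¹, hUnormal.conj_mem u.1 u.2 α⟩ = φ u ^ q ^ n) :
    Nat.card {x : G | orderOf x = 2 ∧ α⁻¹ * x ∈ U} ≤ q ^ n + 1 := by
  classical
  have hαsq : α * α = 1 := by
    have := pow_orderOf_eq_one α
    rwa [hα2, pow_two] at this
  have hαinv : α⁻¹ = α := inv_eq_of_mul_eq_one_left hαsq
  set m := q ^ n + 1 with hm
  -- injective map into roots of unity
  have key : ∀ x : {x : G | orderOf x = 2 ∧ α⁻¹ * x ∈ U},
      (φ ⟨α⁻¹ * x.1, x.2.2⟩) ^ m = 1 := by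
    rintro ⟨x, hx2, hxU⟩
    set u : U := ⟨α⁻¹ * x, hxU⟩ with hu
    have hxeq : x = α * u := by simp [hu]
    have hx2' : x * x = 1 := by
      have := pow_orderOf_eq_one x
      rwa [hx2, pow_two] at this
    have hconj : α * (u : G) * α⁻¹ = (u⁻¹ : U) := by
      have : α * u * (α * u) = 1 := by rw [← hxeq]; exact hx2'
      have h2 : α * u * α⁻¹ * u = 1 := by
        rw [hαinv]; simpa [mul_assoc] using this
      have h3 := eq_inv_of_mul_eq_one_left h2
      simpa using h3
    have h1 : φ ⟨α * (u : G) * α⁻¹, hUnormal.conj_mem u.1 u.2 α⟩ = φ u ^ q ^ n :=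
      hact u
    have h2 : (⟨α * (u : G) * α⁻¹, hUnormal.conj_mem u.1 u.2 α⟩ : U) = u⁻¹ :=
      Subtype.ext hconj
    rw [h2, map_inv] at h1
    have : φ u ^ m = 1 := by
      rw [hm, pow_succ']
      rw [← h1]
      simp
    simpa using this
  let f : {x : G | orderOf x = 2 ∧ α⁻¹ * x ∈ U} → rootsOfUnity m F :=
    fun x => ⟨φ ⟨α⁻¹ * x.1, x.2.2⟩, (mem_rootsOfUnity m _).2 (key x)⟩
  have hf : Function.Injective f := by
    rintro ⟨x, hx⟩ ⟨y, hy⟩ hxy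
    have := hφ (Subtype.ext_iff.1 hxy)
    have : α⁻¹ * x = α⁻¹ * y := Subtype.ext_iff.1 this
    exact Subtype.ext (mul_left_cancel this)
  calc Nat.card {x : G | orderOf x = 2 ∧ α⁻¹ * x ∈ U}
      ≤ Nat.card (rootsOfUnity m F) := Nat.card_le_card_of_injective f hf
    _ ≤ m := by exact card_rootsOfUnity (k := m) (R := F)
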